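/- Let 0 < α < 1 and 0 < T < ∞. There exists a constant C depending only on α and T such that for all 0 < t < T, ∫₀ᵗ s^{α/2−1} (T−t+s)^{α−1} ds ≤ C (1 + ω₁(T−t)). -/

import Mathlib

open MeasureTheory intervalIntegral Real Set

/-- `ω₁(t) = 1 + t^(3α/2−1)/|α(2−3α)|` if `α ≠ 2/3`, and `|ln t|` if `α = 2/3`. -/
noncomputable def omega1 (α t : ℝ) : ℝ :=
  if α = 2 / 3 then |Real.log t| else 1 + t ^ (3 * α / 2 - 1) / |α * (2 - 3 * α)|

lemma f_integrable {α u : ℝ} (hα : 0 < α) (hα1 : α < 1) (hu : 0 < u) {a b : ℝ}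
    (ha : 0 ≤ a) (hab : a ≤ b) :
    IntervalIntegrable (fun s => s ^ (α/2-1) * (u+s) ^ (α-1)) volume a b := by
  have hg : IntervalIntegrable (fun s => u ^ (α-1) * s ^ (α/2-1)) volume a b :=
    (intervalIntegral.intervalIntegrable_rpow' (by linarith)).const_mul _
  refine hg.mono_fun' ?_ ?_
  · exact (by fun_prop : Measurable fun s : ℝ => s ^ (α/2-1) * (u+s) ^ (α-1)).aestronglyMeasurable
  · rw [Filter.EventuallyLE, ae_restrict_iff' measurableSet_uIoc]
    refine Filter.Eventually.of_forall fun s hs => ?_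
    rw [Set.uIoc_of_le hab] at hs
    have hs0 : 0 < s := lt_of_le_of_lt ha hs.1
    have h1 : (0:ℝ) ≤ s ^ (α/2-1) := Real.rpow_nonneg hs0.le _
    have h3 : (0:ℝ) ≤ (u+s) ^ (α-1) := Real.rpow_nonneg (by linarith) _
    have h2 : (u+s) ^ (α-1) ≤ u ^ (α-1) :=
      Real.rpow_le_rpow_of_nonpos hu (by linarith) (by linarith)
    have hn : ‖s ^ (α/2-1) * (u+s) ^ (α-1)‖ = s ^ (α/2-1) * (u+s) ^ (α-1) :=
      norm_of_nonneg (mul_nonneg h1 h3)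
    rw [hn, mul_comm (u ^ (α-1))]
    exact mul_le_mul_of_nonneg_left h2 h1

/-- Bound for the piece near 0: if `a ≤ u` then `∫₀ᵃ ≤ (2/α) u^(3α/2-1)`. -/
lemma step1 {α u : ℝ} (hα : 0 < α) (hα1 : α < 1) (hu : 0 < u) {a : ℝ}
    (ha : 0 ≤ a) (hau : a ≤ u) :
    ∫ s in (0:ℝ)..a, s ^ (α/2-1) * (u+s) ^ (α-1) ≤ 2/α * u ^ (3*α/2-1) := by
  have hg : IntervalIntegrable (fun s => u ^ (α-1) * s ^ (α/2-1)) volume 0 a :=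
    (intervalIntegral.intervalIntegrable_rpow' (by linarith)).const_mul _
  have hmono : ∫ s in (0:ℝ)..a, s ^ (α/2-1) * (u+s) ^ (α-1)
      ≤ ∫ s in (0:ℝ)..a, u ^ (α-1) * s ^ (α/2-1) := by
    refine intervalIntegral.integral_mono_on ha (f_integrable hα hα1 hu le_rfl ha) hg
      fun s hs => ?_
    have hs0 : 0 ≤ s := hs.1
    have h1 : (0:ℝ) ≤ s ^ (α/2-1) := Real.rpow_nonneg hs0 _
    have h2 : (u+s) ^ (α-1) ≤ u ^ (α-1) :=
      Real.rpow_le_rpow_of_nonpos hu (by linarith) (by linarith)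
    rw [mul_comm (u ^ (α-1))]
    exact mul_le_mul_of_nonneg_left h2 h1
  have hα2 : 0 < α/2 := by linarith
  have hcalc : ∫ s in (0:ℝ)..a, u ^ (α-1) * s ^ (α/2-1)
      = u ^ (α-1) * (a ^ (α/2) / (α/2)) := by
    rw [intervalIntegral.integral_const_mul, integral_rpow (Or.inl (by linarith))]
    have he : α/2-1+1 = α/2 := by ring
    rw [he, Real.zero_rpow hα2.ne']
    ring
  have hau' : a ^ (α/2) ≤ u ^ (α/2) := Real.rpow_le_rpow ha hau (by linarith)
  have hu1 : (0:ℝ) ≤ u ^ (α-1) := Real.rpow_nonneg hu.le _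
  have hsplit : u ^ ((3:ℝ)*α/2-1) = u ^ (α-1) * u ^ (α/2) := by
    rw [← Real.rpow_add hu]; ring_nf
  calc ∫ s in (0:ℝ)..a, s ^ (α/2-1) * (u+s) ^ (α-1)
      ≤ u ^ (α-1) * (a ^ (α/2) / (α/2)) := by rw [← hcalc]; exact hmono
    _ ≤ u ^ (α-1) * (u ^ (α/2) / (α/2)) :=
        mul_le_mul_of_nonneg_left (by gcongr) hu1
    _ = 2/α * u ^ (3*α/2-1) := by rw [hsplit]; field_simp

/-- Splitting bound when `u ≤ t`. -/
lemma step2 {α u t : ℝ} (hα : 0 < α) (hα1 : α < 1) (hu : 0 < u) (hut : u ≤ t) :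
    ∫ s in (0:ℝ)..t, s ^ (α/2-1) * (u+s) ^ (α-1)
      ≤ 2/α * u ^ (3*α/2-1) + ∫ s in u..t, s ^ (3*α/2-2) := by
  have hfi1 := f_integrable hα hα1 hu (le_refl (0:ℝ)) hu.le
  have hfi2 := f_integrable hα hα1 hu hu.le hut
  rw [← intervalIntegral.integral_add_adjacent_intervals hfi1 hfi2]
  refine add_le_add (step1 hα hα1 hu hu.le le_rfl) ?_
  have hgi : IntervalIntegrable (fun s : ℝ => s ^ (3*α/2-2)) volume u t := by
    apply ContinuousOn.intervalIntegrable
    intro s hs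
    rw [Set.uIcc_of_le hut] at hs
    exact (Real.continuousAt_rpow_const s _ (Or.inl (by linarith [hs.1]))).continuousWithinAt
  refine intervalIntegral.integral_mono_on hut hfi2 hgi fun s hs => ?_
  have hs0 : 0 < s := lt_of_lt_of_le hu hs.1
  have h1 : (0:ℝ) ≤ s ^ (α/2-1) := Real.rpow_nonneg hs0.le _
  have h2 : (u+s) ^ (α-1) ≤ s ^ (α-1) :=
    Real.rpow_le_rpow_of_nonpos hs0 (by linarith) (by linarith)
  calc s ^ (α/2-1) * (u+s) ^ (α-1) ≤ s ^ (α/2-1) * s ^ (α-1) :=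
        mul_le_mul_of_nonneg_left h2 h1
    _ = s ^ (3*α/2-2) := by rw [← Real.rpow_add hs0]; ring_nf

/-- Convolution-kernel integral estimate with the stronger singularity `s^(α/2−1)`:
`∫₀ᵗ s^(α/2−1) (T−t+s)^(α−1) ds ≤ C (1 + ω₁(T−t))` for all `0 < t < T`. -/
theorem convolution_kernel_integral_omega1
    (α T : ℝ) (hα : 0 < α) (hα1 : α < 1) (hT : 0 < T) :
    ∃ C > (0 : ℝ), ∀ t ∈ Set.Ioo (0 : ℝ) T,
      (∫ s in (0 : ℝ)..t, s ^ (α / 2 - 1) * (T - t + s) ^ (α - 1))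
        ≤ C * (1 + omega1 α (T - t)) := by
  by_cases h23 : α = 2/3
  · subst h23
    refine ⟨4 + max 0 (Real.log T), by positivity, fun t ht => ?_⟩
    obtain ⟨ht0, htT⟩ := ht
    set u := T - t with hu_def
    have hu : 0 < u := by simp only [hu_def]; linarith
    clear_value u
    have homega : omega1 (2/3) u = |Real.log u| := if_pos rfl
    rw [homega]
    have hM : 0 ≤ max 0 (Real.log T) := le_max_left _ _
    have habs : 0 ≤ |Real.log u| := abs_nonneg _
    have hexp0 : ((3:ℝ)*(2/3)/2 - 1) = 0 := by norm_num
    have hu0 : u ^ ((3:ℝ)*(2/3)/2-1) = 1 := by rw [hexp0, Real.rpow_zero]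
    rcases le_total t u with htu | hut
    · have h1 := step1 (by norm_num : (0:ℝ) < 2/3) (by norm_num) hu ht0.le htu
      rw [hu0] at h1
      have h2 : (2:ℝ)/(2/3) * 1 = 3 := by norm_num
      rw [h2] at h1
      nlinarith
    · have h1 := step2 (by norm_num : (0:ℝ) < 2/3) (by norm_num) hu hut
      rw [hu0] at h1
      have hJ : ∫ s in u..t, s ^ ((3:ℝ)*(2/3)/2-2) = Real.log t - Real.log u := by
        have he : ((3:ℝ)*(2/3)/2-2) = -1 := by norm_num
        rw [he]
        simp_rw [Real.rpow_neg_one]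
        rw [integral_inv (by rw [Set.uIcc_of_le hut]; intro h; exact absurd h.1 (not_le.mpr hu)),
          Real.log_div (by linarith) (by linarith)]
      rw [hJ] at h1
      have hlt : Real.log t ≤ Real.log T := Real.log_le_log ht0 (by linarith)
      have hneg : -Real.log u ≤ |Real.log u| := neg_le_abs _
      have h3 : (2:ℝ)/(2/3) * 1 = 3 := by norm_num
      rw [h3] at h1
      nlinarith [le_max_right (0:ℝ) (Real.log T)]
  · -- α ≠ 2/3
    have habs_pos : 0 < |α * (2 - 3*α)| := by
      rw [abs_pos]
      exact mul_ne_zero hα.ne' (fun h => h23 (by linarith))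
    rcases lt_or_gt_of_ne (fun h : α = 2/3 => h23 h) with hlt | hgt
    · -- α < 2/3
      refine ⟨4, by norm_num, fun t ht => ?_⟩
      obtain ⟨ht0, htT⟩ := ht
      set u := T - t with hu_def
      have hu : 0 < u := by simp only [hu_def]; linarith
      clear_value u
      have homega : omega1 α u = 1 + u ^ (3*α/2-1) / |α * (2-3*α)| := if_neg h23
      rw [homega]
      have hDpos : 0 < α * (2 - 3*α) := by nlinarith
      have hD : |α * (2 - 3*α)| = α * (2 - 3*α) := abs_of_pos hDpos
      rw [hD]
      have hub : (0:ℝ) ≤ u ^ (3*α/2-1) := Real.rpow_nonneg hu.le _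
      have h2a : (0:ℝ) < 2 - 3*α := by linarith
      have hkey : ∀ I : ℝ, I ≤ (2/α + 2/(2-3*α)) * u ^ (3*α/2-1) →
          I ≤ 4 * (1 + (1 + u ^ (3*α/2-1) / (α * (2-3*α)))) := by
        intro I hI
        have hcoef : 2/α + 2/(2-3*α) ≤ 4 / (α * (2-3*α)) := by
          rw [div_add_div _ _ hα.ne' h2a.ne', div_le_div_iff₀ (by positivity) hDpos]
          nlinarith
        have h4 : (2/α + 2/(2-3*α)) * u ^ (3*α/2-1)
            ≤ 4 / (α * (2-3*α)) * u ^ (3*α/2-1) :=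
          mul_le_mul_of_nonneg_right hcoef hub
        have h5 : 4 / (α * (2-3*α)) * u ^ (3*α/2-1)
            = 4 * (u ^ (3*α/2-1) / (α * (2-3*α))) := by ring
        have h6 : 0 ≤ u ^ (3*α/2-1) / (α * (2-3*α)) := by positivity
        nlinarith
      rcases le_total t u with htu | hut
      · refine hkey _ ((step1 hα hα1 hu ht0.le htu).trans ?_)
        have : (0:ℝ) ≤ 2/(2-3*α) * u ^ (3*α/2-1) := by positivity
        nlinarith
      · refine hkey _ ((step2 hα hα1 hu hut).trans ?_)
        have hJ : ∫ s in u..t, s ^ (3*α/2-2)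
            = (t ^ (3*α/2-1) - u ^ (3*α/2-1)) / (3*α/2-1) := by
          have hne : 3*α/2-2 ≠ -1 := fun h => h23 (by linarith)
          have hmem : (0:ℝ) ∉ Set.uIcc u t := by
            rw [Set.uIcc_of_le hut]; intro h; exact absurd h.1 (not_le.mpr hu)
          rw [integral_rpow (Or.inr ⟨hne, hmem⟩)]
          have he : 3*α/2-2+1 = 3*α/2-1 := by ring
          rw [he]
        rw [hJ]
        have hβ : 3*α/2 - 1 < 0 := by linarith
        have htb : (0:ℝ) ≤ t ^ (3*α/2-1) := Real.rpow_nonneg ht0.le _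
        have hJle : (t ^ (3*α/2-1) - u ^ (3*α/2-1)) / (3*α/2-1)
            ≤ 2/(2-3*α) * u ^ (3*α/2-1) := by
          rw [div_le_iff_of_neg hβ]
          have h7 : 2/(2-3*α) * u ^ (3*α/2-1) * (3*α/2-1)
              = -u ^ (3*α/2-1) * ((1 - 3*α/2) * (2/(2-3*α))) := by ring
          have h8 : (1 - 3*α/2) * (2/(2-3*α)) = 1 := by field_simp
          rw [h7, h8]
          linarith
        have hx : (2/α + 2/(2-3*α)) * u ^ (3*α/2-1)
            = 2/α * u ^ (3*α/2-1) + 2/(2-3*α) * u ^ (3*α/2-1) := by ring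
        linarith
    · -- α > 2/3
      have h3a0 : (0:ℝ) < 3*α - 2 := by linarith
      have hCpos : (0:ℝ) < 2 + 2 * T ^ (3*α/2-1) / (3*α-2) := by
        have : (0:ℝ) < 2 * T ^ (3*α/2-1) / (3*α-2) :=
          div_pos (by positivity) h3a0
        linarith
      refine ⟨2 + 2 * T ^ (3*α/2-1) / (3*α-2), hCpos, fun t ht => ?_⟩
      obtain ⟨ht0, htT⟩ := ht
      set u := T - t with hu_def
      have hu : 0 < u := by simp only [hu_def]; linarith
      clear_value u
      have homega : omega1 α u = 1 + u ^ (3*α/2-1) / |α * (2-3*α)| := if_neg h23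
      rw [homega]
      have h3a : (0:ℝ) < 3*α - 2 := by linarith
      have hDneg : α * (2 - 3*α) < 0 := by nlinarith
      have hD : |α * (2 - 3*α)| = α * (3*α - 2) := by
        rw [abs_of_neg hDneg]; ring
      rw [hD]
      have hDpos : 0 < α * (3*α - 2) := by positivity
      have hub : (0:ℝ) ≤ u ^ (3*α/2-1) := Real.rpow_nonneg hu.le _
      have hTb : 0 < T ^ (3*α/2-1) := Real.rpow_pos_of_pos hT _
      have hfrac : 0 ≤ u ^ (3*α/2-1) / (α * (3*α-2)) := by positivity
      set C := 2 + 2 * T ^ (3*α/2-1) / (3*α-2) with hC_def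
      clear_value C
      have hC2 : (2:ℝ) ≤ C := by
        have : 0 ≤ 2 * T ^ (3*α/2-1) / (3*α-2) := by positivity
        simp only [hC_def]; linarith
      have hmain : 2/α * u ^ (3*α/2-1) ≤ 2 * (u ^ (3*α/2-1) / (α * (3*α-2))) := by
        have hcoef : 2/α ≤ 2 / (α * (3*α-2)) := by
          rw [div_le_div_iff₀ hα hDpos]
          nlinarith
        calc 2/α * u ^ (3*α/2-1) ≤ 2 / (α * (3*α-2)) * u ^ (3*α/2-1) :=
              mul_le_mul_of_nonneg_right hcoef hub
          _ = 2 * (u ^ (3*α/2-1) / (α * (3*α-2))) := by ring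
      rcases le_total t u with htu | hut
      · have h1 := step1 hα hα1 hu ht0.le htu
        have hcf : 2 * (u ^ (3*α/2-1) / (α * (3*α-2)))
            ≤ C * (u ^ (3*α/2-1) / (α * (3*α-2))) :=
          mul_le_mul_of_nonneg_right hC2 hfrac
        have hexpand : C * (1 + (1 + u ^ (3*α/2-1) / (α * (3*α-2))))
            = 2*C + C * (u ^ (3*α/2-1) / (α * (3*α-2))) := by ring
        rw [hexpand]
        linarith [hmain]
      · have h1 := step2 hα hα1 hu hut
        have hJ : ∫ s in u..t, s ^ (3*α/2-2)
            = (t ^ (3*α/2-1) - u ^ (3*α/2-1)) / (3*α/2-1) := by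
          have hne : 3*α/2-2 ≠ -1 := fun h => h23 (by linarith)
          have hmem : (0:ℝ) ∉ Set.uIcc u t := by
            rw [Set.uIcc_of_le hut]; intro h; exact absurd h.1 (not_le.mpr hu)
          rw [integral_rpow (Or.inr ⟨hne, hmem⟩)]
          have he : 3*α/2-2+1 = 3*α/2-1 := by ring
          rw [he]
        rw [hJ] at h1
        have hβ : 0 < 3*α/2 - 1 := by linarith
        have htb : t ^ (3*α/2-1) ≤ T ^ (3*α/2-1) :=
          Real.rpow_le_rpow ht0.le (by linarith) hβ.le
        have hJle : (t ^ (3*α/2-1) - u ^ (3*α/2-1)) / (3*α/2-1)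
            ≤ 2 * T ^ (3*α/2-1) / (3*α-2) := by
          rw [div_le_div_iff₀ hβ h3a]
          have h9 : (t ^ (3*α/2-1) - u ^ (3*α/2-1)) * (3*α-2)
              ≤ T ^ (3*α/2-1) * (3*α-2) := by
            have : t ^ (3*α/2-1) - u ^ (3*α/2-1) ≤ T ^ (3*α/2-1) := by linarith
            exact mul_le_mul_of_nonneg_right this h3a.le
          have h10 : T ^ (3*α/2-1) * (3*α-2) = 2 * T ^ (3*α/2-1) * (3*α/2-1) := by ring
          linarith
        have hcf : 2 * (u ^ (3*α/2-1) / (α * (3*α-2)))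
            ≤ C * (u ^ (3*α/2-1) / (α * (3*α-2))) :=
          mul_le_mul_of_nonneg_right hC2 hfrac
        have hCT : 2 * T ^ (3*α/2-1) / (3*α-2) ≤ 2*C := by
          have h0 : (0:ℝ) ≤ 2 * T ^ (3*α/2-1) / (3*α-2) := by positivity
          simp only [hC_def]; linarith
        have hexpand : C * (1 + (1 + u ^ (3*α/2-1) / (α * (3*α-2))))
            = 2*C + C * (u ^ (3*α/2-1) / (α * (3*α-2))) := by ring
        rw [hexpand]
        linarith [hmain]
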